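/- Let $r$ be odd, and let $u_1,\dots,u_r, q, \rho$ be invertible elements of a commutative ring with $q - q^{-1}$ invertible. Set $p = \prod_j u_j$, define $\gamma_j$ by the explicit formula of the $u$-admissibility condition, and set $\delta_a = \sum_{j=1}^r \gamma_j u_j^a$ for $a \ge 0$. Then $Z_1(t) := \sum_{a \ge 0} \delta_a t^{-a}$ satisfies $Z_1(t) = \frac{1}{\rho(q^{-1}-q)} + \frac{t^2}{t^2-1} + \left(\frac{\rho^{-1} p}{q - q^{-1}} + \frac{t}{t^2-1}\right) G(t^{-1})$, where $G(t) = \prod_{\ell=1}^r \frac{t-u_\ell}{t u_\ell - 1}$, as an identity of formal power series in $t^{-1}$. -/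

import Mathlib

open Finset Polynomial

/-- Master partial-fraction identity (barycentric Lagrange):
`∏ (t uℓ − 1) / ∏ (t − uℓ) − ∏ uℓ = ∑ᵢ Wᵢ (t − uᵢ)⁻¹`. -/
lemma stmt10_master {r : ℕ} (u : Fin r → ℂ) (hinj : Function.Injective u)
    (h0 : ∀ i, u i ≠ 0) (t : ℂ) (htu : ∀ j, t ≠ u j) :
    ∑ i, ((∏ ℓ ∈ univ.erase i, (u i - u ℓ)⁻¹) * ∏ ℓ, (u i * u ℓ - 1)) * (t - u i)⁻¹
      = (∏ ℓ, (t * u ℓ - 1)) / (∏ ℓ, (t - u ℓ)) - ∏ ℓ, u ℓ := by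
  classical
  have hD : (∏ ℓ, (t - u ℓ)) ≠ 0 :=
    prod_ne_zero_iff.mpr fun ℓ _ => sub_ne_zero.mpr (htu ℓ)
  set p : ℂ := ∏ ℓ, u ℓ with hp
  have hp0 : p ≠ 0 := prod_ne_zero_iff.mpr fun ℓ _ => h0 ℓ
  set A : ℂ[X] := ∏ ℓ, (C (u ℓ) * X - 1) with hA
  have hfac : ∀ ℓ : Fin r, (C (u ℓ) * X - 1 : ℂ[X]) = C (u ℓ) * X + C (-1) := by
    intro ℓ; simp [sub_eq_add_neg]
  have hdegA : A.degree = r := by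
    rw [hA, degree_prod]
    have h1 : ∀ ℓ : Fin r, (C (u ℓ) * X - 1 : ℂ[X]).degree = 1 := fun ℓ => by
      rw [hfac ℓ]; exact degree_linear (h0 ℓ)
    simp [h1]
  have hlcA : A.leadingCoeff = p := by
    rw [hA, leadingCoeff_prod]
    refine Finset.prod_congr rfl fun ℓ _ => ?_
    rw [hfac ℓ]; exact leadingCoeff_linear (h0 ℓ)
  set B : ℂ[X] := C p * Lagrange.nodal univ u with hB
  have hmon : (Lagrange.nodal univ u).Monic := Lagrange.nodal_monic
  have hdegB : B.degree = r := by
    rw [hB, degree_C_mul (hp0), Lagrange.degree_nodal, card_univ, Fintype.card_fin]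
  have hlcB : B.leadingCoeff = p := by
    rw [hB, leadingCoeff_mul, leadingCoeff_C, hmon.leadingCoeff, mul_one]
  have hAne : A ≠ 0 := by
    intro h; rw [h, degree_zero] at hdegA
    exact (by simp : (⊥ : WithBot ℕ) ≠ (r : WithBot ℕ)) hdegA
  have hdegf : (A - B).degree < (#(univ : Finset (Fin r)) : ℕ) := by
    have := degree_sub_lt (hdegA.trans hdegB.symm) hAne (hlcA.trans hlcB.symm)
    rw [hdegA] at this
    simpa [card_univ] using this
  have hvs : Set.InjOn u (univ : Finset (Fin r)) := Function.Injective.injOn hinj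
  have key := Lagrange.eq_interpolate (f := A - B) hvs hdegf
  have hev := Lagrange.eval_interpolate_not_at_node (s := univ) (v := u) (x := t)
    (fun i => eval (u i) (A - B)) (fun i _ => htu i)
  rw [← key] at hev
  have hft : eval t (A - B) = (∏ ℓ, (t * u ℓ - 1)) - p * ∏ ℓ, (t - u ℓ) := by
    rw [eval_sub, hB, eval_mul, eval_C, Lagrange.eval_nodal, hA, eval_prod]
    congr 1
    refine Finset.prod_congr rfl fun ℓ _ => ?_
    simp only [eval_sub, eval_mul, eval_C, eval_X, eval_one]
    ring
  have hfu : ∀ i, eval (u i) (A - B) = ∏ ℓ, (u i * u ℓ - 1) := by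
    intro i
    have hz : (∏ ℓ, (u i - u ℓ)) = 0 :=
      Finset.prod_eq_zero (mem_univ i) (sub_self (u i))
    rw [eval_sub, hB, eval_mul, eval_C, Lagrange.eval_nodal, hz, mul_zero, sub_zero,
      hA, eval_prod]
    refine Finset.prod_congr rfl fun ℓ _ => ?_
    simp only [eval_sub, eval_mul, eval_C, eval_X, eval_one]
    ring
  rw [hft, Lagrange.eval_nodal] at hev
  have hsum : ∑ i, ((∏ ℓ ∈ univ.erase i, (u i - u ℓ)⁻¹) * ∏ ℓ, (u i * u ℓ - 1)) * (t - u i)⁻¹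
      = ∑ i, Lagrange.nodalWeight univ u i * (t - u i)⁻¹ * eval (u i) (A - B) := by
    refine Finset.sum_congr rfl fun i _ => ?_
    rw [hfu i, Lagrange.nodalWeight]
    ring
  rw [hsum, eq_sub_iff_add_eq, eq_div_iff hD]
  linear_combination -hev

/-- Per-term partial-fraction identity used in the main theorem. -/
lemma stmt10_term (t u c P1 P2 P3 : ℂ) (h2 : P2 ≠ 0) (hu0 : u ≠ 0)
    (hI : u * u - 1 ≠ 0) (hu1 : (1:ℂ) - u ≠ 0) (hum1 : (-1:ℂ) - u ≠ 0)
    (htu : t - u ≠ 0) (ht1 : t ^ 2 - 1 ≠ 0) :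
    ((P1 / P2) * ((1 - u ^ 2) * c * P3 + 1)) * (t / (t - u))
      = (-(u * P3 * c) + t * (t ^ 2 - 1)⁻¹) * ((P2⁻¹ * ((u * u - 1) * P1)) * (t - u)⁻¹)
      + (-(1/2) - (t + 1) / 2 * (t ^ 2 - 1)⁻¹) * ((P2⁻¹ * ((u * u - 1) * P1)) * ((1:ℂ) - u)⁻¹)
      + (1/2 - (t - 1) / 2 * (t ^ 2 - 1)⁻¹) * ((P2⁻¹ * ((u * u - 1) * P1)) * ((-1:ℂ) - u)⁻¹)
      + (c * (u * P3)) * ((P2⁻¹ * ((u * u - 1) * P1)) * ((0:ℂ) - u)⁻¹) := by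
  have hI' : u ^ 2 - 1 ≠ 0 := by rw [sq]; exact hI
  have L1 : t / (t - u) = 1 + u * (t - u)⁻¹ := by field_simp; ring
  have L2 : (P1 / P2) * ((1 - u ^ 2) * c * P3 + 1)
      = -(c * P3) * (P2⁻¹ * ((u * u - 1) * P1))
        + (P2⁻¹ * ((u * u - 1) * P1)) * (u * u - 1)⁻¹ := by field_simp; ring
  have L4a : u * (u * u - 1)⁻¹ * (t - u)⁻¹
      = t * (t ^ 2 - 1)⁻¹ * (t - u)⁻¹ + (t * u + 1) * (t ^ 2 - 1)⁻¹ * (u * u - 1)⁻¹ := by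
    field_simp; ring
  have L4b : (t * u + 1) * (u * u - 1)⁻¹
      = -((t + 1) / 2) * ((1:ℂ) - u)⁻¹ - ((t - 1) / 2) * ((-1:ℂ) - u)⁻¹ := by
    field_simp; ring
  have L5 : (u * u - 1)⁻¹ = -(1/2) * ((1:ℂ) - u)⁻¹ + (1/2) * ((-1:ℂ) - u)⁻¹ := by
    field_simp; ring
  have L6 : -(c * P3) = c * (u * P3) * ((0:ℂ) - u)⁻¹ := by
    rw [zero_sub, inv_neg, mul_neg, show c * (u * P3) = c * P3 * u from by ring,
      mul_inv_cancel_right₀ hu0]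
  linear_combination ((P1 / P2) * ((1 - u ^ 2) * c * P3 + 1)) * L1
    + (1 + u * (t - u)⁻¹) * L2
    + (P2⁻¹ * ((u * u - 1) * P1)) * L6
    + (P2⁻¹ * ((u * u - 1) * P1)) * L5
    + (P2⁻¹ * ((u * u - 1) * P1)) * L4a
    + (t ^ 2 - 1)⁻¹ * (P2⁻¹ * ((u * u - 1) * P1)) * L4b

lemma stmt10_final (t p c H : ℂ) (hp : p ≠ 0) (ht1 : t ^ 2 - 1 ≠ 0) :
    (-(p * c) + t * (t ^ 2 - 1)⁻¹) * (H - p)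
      + (-(1/2) - (t + 1) / 2 * (t ^ 2 - 1)⁻¹) * (-1 - p)
      + (1/2 - (t - 1) / 2 * (t ^ 2 - 1)⁻¹) * (1 - p)
      + c * p * (p⁻¹ - p)
      = c + t ^ 2 / (t ^ 2 - 1) + (-(p * c) + t / (t ^ 2 - 1)) * H := by
  have hi : (t ^ 2 - 1) * (t ^ 2 - 1)⁻¹ = 1 := mul_inv_cancel₀ ht1
  have hj : p * p⁻¹ = 1 := mul_inv_cancel₀ hp
  linear_combination (-1 : ℂ) * hi + c * hj

/-- (`r` odd.)  With `γⱼ` given by the `u`-admissibility formula,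
`p = ∏ⱼ uⱼ`, `δ_a = ∑ⱼ γⱼ uⱼ^a` and `Z₁(t) = ∑_{a≥0} δ_a t^{−a} = ∑ⱼ γⱼ t/(t−uⱼ)`,
one has the identity (of rational functions, stated pointwise at generic `t`):
`Z₁(t) = 1/(ρ(q⁻¹−q)) + t²/(t²−1) + (ρ⁻¹p/(q−q⁻¹) + t/(t²−1)) · G(t⁻¹)`,
where `G(t) = ∏_ℓ (t−u_ℓ)/(t u_ℓ−1)`. -/
theorem stmt10 {r : ℕ} (hr : Odd r) (u : Fin r → ℂ)
    (hinj : Function.Injective u) (h0 : ∀ i, u i ≠ 0)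
    (h1 : ∀ i j, u i * u j ≠ 1)
    (ρ q : ℂ) (hρ : ρ ≠ 0) (hq : q ≠ 0) (hq2 : q ^ 2 ≠ 1)
    (γ : Fin r → ℂ)
    (hγ : ∀ j, γ j = (∏ ℓ ∈ univ.erase j, ((u ℓ * u j - 1) / (u j - u ℓ))) *
        ((1 - u j ^ 2) / (ρ * (q⁻¹ - q)) * ∏ ℓ ∈ univ.erase j, u ℓ + 1))
    (t : ℂ) (ht0 : t ≠ 0) (ht1 : t ^ 2 ≠ 1) (htu : ∀ j, t ≠ u j) :
    ∑ j, γ j * (t / (t - u j))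
      = 1 / (ρ * (q⁻¹ - q)) + t ^ 2 / (t ^ 2 - 1) +
        (ρ⁻¹ * (∏ ℓ, u ℓ) / (q - q⁻¹) + t / (t ^ 2 - 1)) *
          ∏ ℓ, ((t⁻¹ - u ℓ) / (t⁻¹ * u ℓ - 1)) := by
  classical
  -- nonvanishing facts
  have hqi : q * q⁻¹ = 1 := mul_inv_cancel₀ hq
  have hqq : q⁻¹ - q ≠ 0 := by
    intro h
    exact hq2 (by linear_combination (-q) * h + hqi)
  have hqq' : q - q⁻¹ ≠ 0 := fun h => hqq (by linear_combination -h)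
  have hrq : ρ * (q⁻¹ - q) ≠ 0 := mul_ne_zero hρ hqq
  have hu2 : ∀ j, u j * u j - 1 ≠ 0 := fun j => sub_ne_zero.mpr (h1 j j)
  have hu1 : ∀ j, (1:ℂ) - u j ≠ 0 := by
    intro j h
    exact h1 j j (by rw [sub_eq_zero] at h; rw [← h, mul_one])
  have hum1 : ∀ j, (-1:ℂ) - u j ≠ 0 := by
    intro j h
    rw [sub_eq_zero] at h
    exact h1 j j (by rw [← h]; ring)
  have htuj : ∀ j, t - u j ≠ 0 := fun j => sub_ne_zero.mpr (htu j)
  have ht1' : t ^ 2 - 1 ≠ 0 := sub_ne_zero.mpr ht1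
  have hr1 : ((-1 : ℂ)) ^ r = -1 := Odd.neg_one_pow hr
  set c : ℂ := (ρ * (q⁻¹ - q))⁻¹ with hc
  set p : ℂ := ∏ ℓ, u ℓ with hpdef
  have hp0 : p ≠ 0 := prod_ne_zero_iff.mpr fun ℓ _ => h0 ℓ
  -- the weights and the master identity
  set W : Fin r → ℂ :=
    fun i => (∏ ℓ ∈ univ.erase i, (u i - u ℓ)⁻¹) * ∏ ℓ, (u i * u ℓ - 1) with hW
  have hS : ∀ x : ℂ, (∀ j, x ≠ u j) →
      ∑ i, W i * (x - u i)⁻¹ = (∏ ℓ, (x * u ℓ - 1)) / (∏ ℓ, (x - u ℓ)) - p :=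
    fun x hx => stmt10_master u hinj h0 x hx
  -- neg-product helper
  have hnegprod : ∀ f : Fin r → ℂ, (∏ ℓ, (-(f ℓ))) = -∏ ℓ, f ℓ := by
    intro f
    calc (∏ ℓ, (-(f ℓ))) = ∏ ℓ, ((-1) * f ℓ) := Finset.prod_congr rfl fun ℓ _ => by ring
      _ = (∏ _ℓ : Fin r, (-1 : ℂ)) * ∏ ℓ, f ℓ := by rw [Finset.prod_mul_distrib]
      _ = -∏ ℓ, f ℓ := by
          rw [Finset.prod_const, card_univ, Fintype.card_fin, hr1, neg_one_mul]
  -- the four sum evaluations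
  have hS1 : ∑ i, W i * ((1:ℂ) - u i)⁻¹ = -1 - p := by
    rw [hS 1 (fun j h => hu1 j (sub_eq_zero.mpr h))]
    have hD1 : (∏ ℓ, ((1:ℂ) - u ℓ)) ≠ 0 := prod_ne_zero_iff.mpr fun ℓ _ => hu1 ℓ
    have hN : (∏ ℓ, ((1:ℂ) * u ℓ - 1)) = -∏ ℓ, ((1:ℂ) - u ℓ) := by
      rw [show (∏ ℓ, ((1:ℂ) * u ℓ - 1)) = ∏ ℓ, (-(1 - u ℓ)) from
        Finset.prod_congr rfl fun ℓ _ => by ring, hnegprod]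
    rw [hN, neg_div, div_self hD1]
  have hSm1 : ∑ i, W i * ((-1:ℂ) - u i)⁻¹ = 1 - p := by
    rw [hS (-1) (fun j h => hum1 j (sub_eq_zero.mpr h))]
    have hDm : (∏ ℓ, ((-1:ℂ) - u ℓ)) ≠ 0 := prod_ne_zero_iff.mpr fun ℓ _ => hum1 ℓ
    have hN : (∏ ℓ, ((-1:ℂ) * u ℓ - 1)) = ∏ ℓ, ((-1:ℂ) - u ℓ) :=
      Finset.prod_congr rfl fun ℓ _ => by ring
    rw [hN, div_self hDm]
  have hS0 : ∑ i, W i * ((0:ℂ) - u i)⁻¹ = p⁻¹ - p := by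
    rw [hS 0 (fun j h => h0 j h.symm)]
    have hN : (∏ ℓ, ((0:ℂ) * u ℓ - 1)) = -1 := by
      rw [show (∏ ℓ, ((0:ℂ) * u ℓ - 1)) = ∏ _ℓ : Fin r, (-1:ℂ) from
        Finset.prod_congr rfl fun ℓ _ => by ring,
        Finset.prod_const, card_univ, Fintype.card_fin, hr1]
    have hD : (∏ ℓ, ((0:ℂ) - u ℓ)) = -p := by
      rw [show (∏ ℓ, ((0:ℂ) - u ℓ)) = ∏ ℓ, (-(u ℓ)) from
        Finset.prod_congr rfl fun ℓ _ => by ring, hnegprod, hpdef]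
    rw [hN, hD, neg_div_neg_eq, one_div]
  have hSt : ∑ i, W i * (t - u i)⁻¹
      = (∏ ℓ, (t * u ℓ - 1)) / (∏ ℓ, (t - u ℓ)) - p := hS t htu
  -- termwise decomposition
  have hterm : ∀ j ∈ (univ : Finset (Fin r)), γ j * (t / (t - u j))
      = (-(p * c) + t * (t ^ 2 - 1)⁻¹) * (W j * (t - u j)⁻¹)
      + (-(1/2) - (t + 1) / 2 * (t ^ 2 - 1)⁻¹) * (W j * ((1:ℂ) - u j)⁻¹)
      + (1/2 - (t - 1) / 2 * (t ^ 2 - 1)⁻¹) * (W j * ((-1:ℂ) - u j)⁻¹)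
      + (c * p) * (W j * ((0:ℂ) - u j)⁻¹) := by
    intro j _
    have hP3 : u j * ∏ ℓ ∈ univ.erase j, u ℓ = p :=
      Finset.mul_prod_erase univ u (mem_univ j)
    have h2 : (∏ ℓ ∈ univ.erase j, (u j - u ℓ)) ≠ 0 :=
      prod_ne_zero_iff.mpr fun ℓ hl =>
        sub_ne_zero.mpr fun he => (mem_erase.mp hl).1 (hinj he.symm)
    have hγj : γ j = ((∏ ℓ ∈ univ.erase j, (u ℓ * u j - 1)) / ∏ ℓ ∈ univ.erase j, (u j - u ℓ))
        * ((1 - u j ^ 2) * c * (∏ ℓ ∈ univ.erase j, u ℓ) + 1) := by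
      rw [hγ j, Finset.prod_div_distrib, div_eq_mul_inv (1 - u j ^ 2), ← hc]
    have hWj : W j = (∏ ℓ ∈ univ.erase j, (u j - u ℓ))⁻¹
        * ((u j * u j - 1) * ∏ ℓ ∈ univ.erase j, (u ℓ * u j - 1)) := by
      rw [hW]
      dsimp only
      rw [← Finset.mul_prod_erase univ (fun ℓ => u j * u ℓ - 1) (mem_univ j),
        Finset.prod_inv_distrib,
        show (∏ ℓ ∈ univ.erase j, (u j * u ℓ - 1)) = ∏ ℓ ∈ univ.erase j, (u ℓ * u j - 1) from
          Finset.prod_congr rfl fun ℓ _ => by ring]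
    rw [hγj, hWj, ← hP3]
    exact stmt10_term t (u j) c _ _ _ h2 (h0 j) (hu2 j) (hu1 j) (hum1 j) (htuj j) ht1'
  -- assemble the sum
  rw [Finset.sum_congr rfl hterm]
  rw [Finset.sum_add_distrib, Finset.sum_add_distrib, Finset.sum_add_distrib,
    ← Finset.mul_sum, ← Finset.mul_sum, ← Finset.mul_sum, ← Finset.mul_sum,
    hSt, hS1, hSm1, hS0]
  -- the G product
  have hfactor : ∀ ℓ : Fin r, (t⁻¹ - u ℓ) / (t⁻¹ * u ℓ - 1) = (t * u ℓ - 1) / (t - u ℓ) := by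
    intro ℓ
    have hd1 : t⁻¹ * u ℓ - 1 ≠ 0 := by
      rw [show t⁻¹ * u ℓ - 1 = t⁻¹ * (u ℓ - t) from by field_simp]
      exact mul_ne_zero (inv_ne_zero ht0) (sub_ne_zero.mpr fun h => htu ℓ h.symm)
    rw [div_eq_div_iff hd1 (htuj ℓ)]
    field_simp
    ring
  have hG : (∏ ℓ, ((t⁻¹ - u ℓ) / (t⁻¹ * u ℓ - 1)))
      = (∏ ℓ, (t * u ℓ - 1)) / ∏ ℓ, (t - u ℓ) := by
    rw [Finset.prod_congr rfl fun ℓ _ => hfactor ℓ, Finset.prod_div_distrib]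
  rw [hG]
  -- final rational-function identity
  have hc1 : 1 / (ρ * (q⁻¹ - q)) = c := by rw [one_div, hc]
  have hc2 : ρ⁻¹ * p / (q - q⁻¹) = -(p * c) := by
    rw [hc, div_eq_mul_inv, mul_inv ρ (q⁻¹ - q),
      show (q⁻¹ - q)⁻¹ = -(q - q⁻¹)⁻¹ from by rw [← inv_neg, neg_sub]]
    ring
  rw [hc1, hc2]
  set H : ℂ := (∏ ℓ, (t * u ℓ - 1)) / ∏ ℓ, (t - u ℓ) with hH
  exact stmt10_final t p c H hp0 ht1'
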